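/- For 1 ≤ k ≤ n, s₁(n,k) = Σ_{r=k−1}^{n−1} (−1)^{n−1−r} · binomial(2n−2−r, k−1) · S₂(2n−1−k−r, n−1−r), where S₂(m,j) denotes the associated Stirling numbers of the second kind (partitions of an m-set into j blocks each of size ≥ 2). -/

import Mathlib

open Finset MvPolynomial

/-- The set of (n,k)-partition types: tuples (r₁,…,rₙ) (rⱼ = r (j-1)) with Σ rᵢ = k, Σ i·rᵢ = n. -/
def ptypes (n k : ℕ) : Finset (Fin n → ℕ) :=
  (Fintype.piFinset fun _ : Fin n => Finset.range (n + 1)).filter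
    fun r => (∑ i, r i) = k ∧ (∑ i, (i.1 + 1) * r i) = n

/-- Denominator of the Faà di Bruno coefficient: ∏ rᵢ!·(i!)^{rᵢ}. -/
def bruDenom {n : ℕ} (r : Fin n → ℕ) : ℕ :=
  ∏ i, (r i).factorial * ((i.1 + 1).factorial) ^ (r i)

/-- Partial exponential Bell polynomial (variable `X j` stands for X_{j+1}). -/
noncomputable def Bell (n k : ℕ) : MvPolynomial ℕ ℤ :=
  ∑ r ∈ ptypes n k,
    C ((n.factorial / bruDenom r : ℕ) : ℤ) * ∏ i, (X i.1 : MvPolynomial ℕ ℤ) ^ (r i)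

/-- Associated Bell polynomial: Bell with X₁ (= `X 0`) set to 0. -/
noncomputable def BellT (n k : ℕ) : MvPolynomial ℕ ℤ :=
  aeval (fun j => if j = 0 then 0 else (X j : MvPolynomial ℕ ℤ)) (Bell n k)

/-- Signed Stirling numbers of the first kind. -/
def s1 : ℕ → ℕ → ℤ
  | 0, 0 => 1
  | 0, _ + 1 => 0
  | _ + 1, 0 => 0
  | n + 1, k + 1 => s1 n k - n * s1 n (k + 1)

/-- Stirling numbers of the second kind. -/
def s2 : ℕ → ℕ → ℤ
  | 0, 0 => 1
  | 0, _ + 1 => 0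
  | _ + 1, 0 => 0
  | n + 1, k + 1 => s2 n k + (k + 1) * s2 n (k + 1)

/-- Unsigned Stirling numbers of the first kind (cycle numbers). -/
def cyc : ℕ → ℕ → ℕ
  | 0, 0 => 1
  | 0, _ + 1 => 0
  | _ + 1, 0 => 0
  | n + 1, k + 1 => cyc n k + n * cyc n (k + 1)

/-- First entry r₁ of a partition type (0 if the tuple is empty). -/
def firstEntry {m : ℕ} (r : Fin m → ℕ) : ℕ :=
  ∑ i ∈ Finset.univ.filter (fun i : Fin m => i.1 = 0), r i

/-- Multivariate Stirling polynomials of the first kind, via the differential recurrence. -/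
noncomputable def Spoly : ℕ → ℕ → MvPolynomial ℕ ℤ
  | 0, _ => 0
  | 1, k => if k = 1 then 1 else 0
  | n + 2, k =>
    if k = 0 then 0 else
      C (-(2 * (n : ℤ) + 1)) * X 1 * Spoly (n + 1) k
        + X 0 * (Spoly (n + 1) (k - 1)
          + ∑ j ∈ Finset.Icc 1 ((n + 1) - k + 1),
              X j * pderiv (j - 1) (Spoly (n + 1) k))

/-- Associated Stirling numbers of the second kind: partitions into blocks of size ≥ 2. -/
def assocS2 (m j : ℕ) : ℤ :=
  ∑ r ∈ (ptypes m j).filter (fun r => ∀ i : Fin m, i.1 = 0 → r i = 0),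
    ((m.factorial / bruDenom r : ℕ) : ℤ)

namespace S1A

def tsum (f : ℕ →₀ ℕ) : ℕ := f.sum fun _ c => c
def wsum (f : ℕ →₀ ℕ) : ℕ := f.sum fun x c => (x + 1) * c
def dq (f : ℕ →₀ ℕ) : ℕ := f.prod fun x c => c.factorial * ((x + 1).factorial) ^ c

lemma tsum_eq_of_subset {f : ℕ →₀ ℕ} {s : Finset ℕ} (hs : f.support ⊆ s) :
    tsum f = ∑ x ∈ s, f x :=
  Finsupp.sum_of_support_subset f hs _ (fun _ _ => rfl)

lemma wsum_eq_of_subset {f : ℕ →₀ ℕ} {s : Finset ℕ} (hs : f.support ⊆ s) :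
    wsum f = ∑ x ∈ s, (x + 1) * f x :=
  Finsupp.sum_of_support_subset f hs _ (fun _ _ => by simp)

lemma dq_eq_of_subset {f : ℕ →₀ ℕ} {s : Finset ℕ} (hs : f.support ⊆ s) :
    dq f = ∏ x ∈ s, (f x).factorial * ((x + 1).factorial) ^ (f x) :=
  Finsupp.prod_of_support_subset f hs _ (fun _ _ => by simp)

lemma dq_pos (f : ℕ →₀ ℕ) : 0 < dq f :=
  Finset.prod_pos fun _ _ =>
    Nat.mul_pos (Nat.factorial_pos _) (pow_pos (Nat.factorial_pos _) _)

lemma tsum_add_single (f : ℕ →₀ ℕ) (x : ℕ) : tsum (f + Finsupp.single x 1) = tsum f + 1 := by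
  unfold tsum
  rw [Finsupp.sum_add_index' (fun _ => rfl) (fun _ _ _ => rfl), Finsupp.sum_single_index rfl]

lemma wsum_add_single (f : ℕ →₀ ℕ) (x : ℕ) :
    wsum (f + Finsupp.single x 1) = wsum f + (x + 1) := by
  unfold wsum
  rw [Finsupp.sum_add_index' (fun a => by simp) (fun a b c => by ring),
    Finsupp.sum_single_index (by simp)]
  simp

lemma dq_add_single (f : ℕ →₀ ℕ) (x : ℕ) :
    dq (f + Finsupp.single x 1) = dq f * ((f x + 1) * (x + 1).factorial) := by
  classical
  set s : Finset ℕ := insert x f.support with hs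
  have h1 : f.support ⊆ s := Finset.subset_insert _ _
  have h2 : (f + Finsupp.single x 1).support ⊆ s := by
    refine Finsupp.support_add.trans ?_
    intro y hy
    rcases Finset.mem_union.1 hy with h | h
    · exact Finset.mem_insert_of_mem h
    · have := Finsupp.support_single_subset h
      simp only [Finset.mem_singleton] at this
      simp [this, hs]
  rw [dq_eq_of_subset h1, dq_eq_of_subset h2]
  have hx : x ∈ s := Finset.mem_insert_self _ _
  rw [← Finset.mul_prod_erase s _ hx, ← Finset.mul_prod_erase s _ hx]
  have he : ∀ y ∈ s.erase x,
      (((f + Finsupp.single x 1) : ℕ →₀ ℕ) y).factorial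
          * ((y + 1).factorial) ^ (((f + Finsupp.single x 1) : ℕ →₀ ℕ) y)
        = (f y).factorial * ((y + 1).factorial) ^ (f y) := by
    intro y hy
    have hne : y ≠ x := Finset.ne_of_mem_erase hy
    rw [Finsupp.add_apply, Finsupp.single_apply, if_neg (Ne.symm hne), Nat.add_zero]
  rw [Finset.prod_congr rfl he]
  have hfx : ((f + Finsupp.single x 1) : ℕ →₀ ℕ) x = f x + 1 := by simp
  rw [hfx, Nat.factorial_succ, pow_succ]
  ring

noncomputable def decF (f : ℕ →₀ ℕ) (x : ℕ) : ℕ →₀ ℕ := f.update x (f x - 1)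

lemma decF_apply (f : ℕ →₀ ℕ) (x y : ℕ) :
    decF f x y = if y = x then f x - 1 else f y := by
  simp [decF, Finsupp.update, Function.update_apply]

lemma dec_add {f : ℕ →₀ ℕ} {x : ℕ} (hx : f x ≠ 0) :
    decF f x + Finsupp.single x 1 = f := by
  ext y
  rw [Finsupp.add_apply, decF_apply, Finsupp.single_apply]
  by_cases h : y = x
  · subst h; simp; omega
  · simp [h, Ne.symm h]

lemma dec_add_self (h : ℕ →₀ ℕ) (x : ℕ) :
    decF (h + Finsupp.single x 1) x = h := by
  ext y
  rw [decF_apply]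
  by_cases hyx : y = x
  · subst hyx; simp
  · rw [if_neg hyx, Finsupp.add_apply, Finsupp.single_apply, if_neg (Ne.symm hyx), Nat.add_zero]

lemma support_subset_range {f : ℕ →₀ ℕ} {m : ℕ} (hw : wsum f = m) :
    f.support ⊆ Finset.range m := by
  intro x hx
  have hfx : f x ≠ 0 := Finsupp.mem_support_iff.1 hx
  have hle : (x + 1) * f x ≤ wsum f := by
    unfold wsum Finsupp.sum
    exact Finset.single_le_sum (f := fun y => (y + 1) * f y) (fun y _ => Nat.zero_le _) hx
  rw [hw] at hle
  have : x + 1 ≤ m := le_trans (by nlinarith [Nat.one_le_iff_ne_zero.2 hfx]) hle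
  exact Finset.mem_range.2 this

/-- Convert a tuple to a finsupp. -/
noncomputable def toF {m : ℕ} (r : Fin m → ℕ) : ℕ →₀ ℕ :=
  Finsupp.onFinset (Finset.range m)
    (fun x => if h : x < m then r ⟨x, h⟩ else 0)
    (fun x hx => by
      rw [Finset.mem_range]
      by_contra h
      exact hx (dif_neg (fun hlt => h hlt)))

lemma toF_apply_lt {m : ℕ} (r : Fin m → ℕ) {x : ℕ} (h : x < m) : toF r x = r ⟨x, h⟩ := by
  simp [toF, dif_pos h]

lemma toF_apply_fin {m : ℕ} (r : Fin m → ℕ) (i : Fin m) : toF r i.1 = r i := by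
  rw [toF_apply_lt r i.2]

lemma toF_support {m : ℕ} (r : Fin m → ℕ) : (toF r).support ⊆ Finset.range m :=
  Finsupp.support_onFinset_subset

lemma sum_toF {M : Type*} [AddCommMonoid M] {m : ℕ} (r : Fin m → ℕ) (g : ℕ → ℕ → M)
    (hg : ∀ x, g x 0 = 0) : (toF r).sum g = ∑ i : Fin m, g i.1 (r i) := by
  rw [Finsupp.sum_of_support_subset _ (toF_support r) _ (fun x _ => hg x)]
  rw [← Fin.sum_univ_eq_sum_range (fun x => g x (toF r x)) m]
  exact Finset.sum_congr rfl (fun i _ => by rw [toF_apply_fin])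

lemma prod_toF {M : Type*} [CommMonoid M] {m : ℕ} (r : Fin m → ℕ) (g : ℕ → ℕ → M)
    (hg : ∀ x, g x 0 = 1) : (toF r).prod g = ∏ i : Fin m, g i.1 (r i) := by
  rw [Finsupp.prod_of_support_subset _ (toF_support r) _ (fun x _ => hg x)]
  rw [← Fin.prod_univ_eq_prod_range (fun x => g x (toF r x)) m]
  exact Finset.prod_congr rfl (fun i _ => by rw [toF_apply_fin])

/-- The finsupp version of the index set of `assocS2`. -/
noncomputable def NN (m j : ℕ) : Finset (ℕ →₀ ℕ) :=
  ((ptypes m j).filter (fun r => ∀ i : Fin m, i.1 = 0 → r i = 0)).image toF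

lemma mem_NN {m j : ℕ} {f : ℕ →₀ ℕ} :
    f ∈ NN m j ↔ tsum f = j ∧ wsum f = m ∧ f 0 = 0 := by
  constructor
  · rintro hf
    obtain ⟨r, hr, rfl⟩ := Finset.mem_image.1 hf
    rw [Finset.mem_filter] at hr
    obtain ⟨hr1, hr0⟩ := hr
    rw [ptypes, Finset.mem_filter] at hr1
    obtain ⟨-, hsum, hwsum⟩ := hr1
    refine ⟨?_, ?_, ?_⟩
    · rw [tsum, sum_toF r _ (fun _ => rfl), hsum]
    · rw [wsum, sum_toF r _ (fun x => by simp)]; exact hwsum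
    · by_cases hm : 0 < m
      · rw [toF_apply_lt r hm]; exact hr0 ⟨0, hm⟩ rfl
      · simp only [toF, Finsupp.onFinset_apply]; rw [dif_neg hm]
  · rintro ⟨ht, hw, h0⟩
    have hsupp : f.support ⊆ Finset.range m := support_subset_range hw
    have hres : toF (fun i : Fin m => f i.1) = f := by
      ext x
      by_cases h : x < m
      · rw [toF_apply_lt _ h]
      · simp only [toF, Finsupp.onFinset_apply]
        rw [dif_neg h]
        by_contra hne
        exact h (Finset.mem_range.1 (hsupp (Finsupp.mem_support_iff.2 (fun hh => hne hh.symm))))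
    rw [NN, Finset.mem_image]
    refine ⟨fun i : Fin m => f i.1, ?_, hres⟩
    rw [Finset.mem_filter, ptypes, Finset.mem_filter]
    have hsf : ∑ i : Fin m, f i.1 = tsum f := by
      rw [tsum_eq_of_subset hsupp, ← Fin.sum_univ_eq_sum_range (fun x => f x) m]
    have hwf : ∑ i : Fin m, (i.1 + 1) * f i.1 = wsum f := by
      rw [wsum_eq_of_subset hsupp, ← Fin.sum_univ_eq_sum_range (fun x => (x + 1) * f x) m]
    refine ⟨⟨?_, by rw [hsf, ht], by rw [hwf, hw]⟩,
      fun i hi => by show f i.1 = 0; rw [hi]; exact h0⟩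
    · rw [Fintype.mem_piFinset]
      intro i
      rw [Finset.mem_range]
      by_cases hz : f i.1 = 0
      · omega
      · have hle : (i.1 + 1) * f i.1 ≤ wsum f := by
          unfold wsum Finsupp.sum
          exact Finset.single_le_sum (f := fun y => (y + 1) * f y) (fun y _ => Nat.zero_le _)
            (Finsupp.mem_support_iff.2 hz)
        rw [hw] at hle; nlinarith

lemma toF_injective {m : ℕ} : Function.Injective (toF (m := m)) := by
  intro r r' h
  funext i
  have := congrArg (fun f : ℕ →₀ ℕ => f i.1) h
  simpa [toF_apply_fin] using this

lemma assocS2_NN (m j : ℕ) :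
    assocS2 m j = ∑ f ∈ NN m j, ((m.factorial / dq f : ℕ) : ℤ) := by
  rw [NN, Finset.sum_image (fun r _ r' _ h => toF_injective h)]
  refine Finset.sum_congr rfl (fun r _ => ?_)
  congr 2
  rw [bruDenom, dq, prod_toF r _ (fun x => by simp)]

lemma dq_dvd {m j : ℕ} {f : ℕ →₀ ℕ} (hf : f ∈ NN m j) : dq f ∣ m.factorial := by
  obtain ⟨ht, hw, h0⟩ := mem_NN.1 hf
  have h1 : dq f ∣ ∏ x ∈ f.support, ((x + 1) * f x).factorial := by
    refine Finset.prod_dvd_prod_of_dvd _ _ (fun x _ => ?_)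
    have hbell := Nat.uniformBell_mul_eq (f x) (n := x + 1) (by omega)
    refine ⟨Nat.uniformBell (f x) (x + 1), ?_⟩
    rw [mul_comm (x + 1) (f x), ← hbell]; ring
  have h2 : (∏ x ∈ f.support, ((x + 1) * f x).factorial)
      ∣ (∑ x ∈ f.support, (x + 1) * f x).factorial :=
    Nat.prod_factorial_dvd_factorial_sum _ _
  have h3 : (∑ x ∈ f.support, (x + 1) * f x) = m := hw
  rw [h3] at h2
  exact h1.trans h2

end S1A
namespace S1A

noncomputable def Wq (m j : ℕ) : ℚ := ∑ f ∈ NN m j, (m.factorial : ℚ) / (dq f : ℚ)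

lemma assocS2_eq_Wq (m j : ℕ) : (assocS2 m j : ℚ) = Wq m j := by
  rw [assocS2_NN, Wq, Int.cast_sum]
  refine Finset.sum_congr rfl (fun f hf => ?_)
  rw [Int.cast_natCast, Nat.cast_div (dq_dvd hf) (by exact_mod_cast (dq_pos f).ne')]

lemma Wq_rec (m j : ℕ) :
    Wq (m + 2) (j + 1) = (j + 1) * Wq (m + 1) (j + 1) + (m + 1) * Wq m j := by
  classical
  have expand : ∀ f ∈ NN (m + 2) (j + 1),
      ((m + 2).factorial : ℚ) / (dq f : ℚ)
        = (2 * (f 1 : ℚ)) * (((m + 1).factorial : ℚ) / (dq f : ℚ))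
          + ∑ x ∈ f.support.filter (fun x => 2 ≤ x),
              (((x : ℚ) + 1) * (f x : ℚ)) * (((m + 1).factorial : ℚ) / (dq f : ℚ)) := by
    intro f hf
    obtain ⟨ht, hw, h0⟩ := mem_NN.1 hf
    have h1 : ∑ x ∈ f.support.filter (fun x => ¬ 2 ≤ x), (x + 1) * f x = 2 * f 1 := by
      by_cases hf1 : f 1 = 0
      · rw [Finset.filter_false_of_mem, Finset.sum_empty, hf1, Nat.mul_zero]
        intro x hx
        have hx0 : f x ≠ 0 := Finsupp.mem_support_iff.1 hx
        have hxne : x ≠ 0 := fun h => hx0 (h ▸ h0)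
        have hxne1 : x ≠ 1 := fun h => hx0 (h ▸ hf1)
        omega
      · have hsel : f.support.filter (fun x => ¬ 2 ≤ x) = {1} := by
          ext x
          simp only [Finset.mem_filter, Finsupp.mem_support_iff, Finset.mem_singleton]
          constructor
          · rintro ⟨hx0, hx2⟩
            have hxne : x ≠ 0 := fun h => hx0 (h ▸ h0)
            omega
          · rintro rfl; exact ⟨hf1, by omega⟩
        rw [hsel, Finset.sum_singleton]
    have hsplit : 2 * f 1 + (∑ x ∈ f.support.filter (fun x => 2 ≤ x), (x + 1) * f x) = m + 2 := by
      have := Finset.sum_filter_add_sum_filter_not f.support (fun x => 2 ≤ x)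
        (fun x => (x + 1) * f x)
      have hwsupp : ∑ x ∈ f.support, (x + 1) * f x = m + 2 := hw
      omega
    have hcast : ((m : ℚ) + 2)
        = 2 * (f 1 : ℚ) + ∑ x ∈ f.support.filter (fun x => 2 ≤ x), ((x : ℚ) + 1) * (f x : ℚ) := by
      exact_mod_cast hsplit.symm
    have hfac : ((m + 2).factorial : ℚ) = ((m : ℚ) + 2) * ((m + 1).factorial : ℚ) := by
      rw [Nat.factorial_succ (m + 1)]; push_cast; ring
    rw [hfac, hcast, add_mul, Finset.sum_mul, add_div, Finset.sum_div]
    congr 1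
    · rw [mul_div_assoc]
    · exact Finset.sum_congr rfl (fun x _ => by rw [mul_div_assoc])
  have hP2 : ∑ f ∈ NN (m + 2) (j + 1), ∑ x ∈ f.support.filter (fun x => 2 ≤ x),
        (((x : ℚ) + 1) * (f x : ℚ)) * (((m + 1).factorial : ℚ) / (dq f : ℚ))
      = ((j : ℚ) + 1) * Wq (m + 1) (j + 1) := by
    rw [Finset.sum_sigma']
    rw [Finset.sum_nbij'
      (i := fun p : Σ _ : ℕ →₀ ℕ, ℕ =>
        (⟨decF p.1 p.2 + Finsupp.single (p.2 - 1) 1, p.2 - 1⟩ : Σ _ : ℕ →₀ ℕ, ℕ))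
      (j := fun q : Σ _ : ℕ →₀ ℕ, ℕ =>
        (⟨decF q.1 q.2 + Finsupp.single (q.2 + 1) 1, q.2 + 1⟩ : Σ _ : ℕ →₀ ℕ, ℕ))
      (t := (NN (m + 1) (j + 1)).sigma (fun g => g.support))
      (g := fun q => (q.1 q.2 : ℚ) * (((m + 1).factorial : ℚ) / (dq q.1 : ℚ)))
      ?hi ?hj ?left ?right ?val]
    · rw [Finset.sum_sigma]
      have hrow : ∀ g ∈ NN (m + 1) (j + 1),
          ∑ y ∈ g.support, (g y : ℚ) * (((m + 1).factorial : ℚ) / (dq g : ℚ))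
            = ((j : ℚ) + 1) * (((m + 1).factorial : ℚ) / (dq g : ℚ)) := by
        intro g hg
        obtain ⟨ht, -, -⟩ := mem_NN.1 hg
        rw [← Finset.sum_mul]
        congr 1
        have hcast : (tsum g : ℚ) = ∑ y ∈ g.support, (g y : ℚ) := by
          rw [tsum, Finsupp.sum, Nat.cast_sum]
        rw [← hcast, ht]; push_cast; ring
      rw [Finset.sum_congr rfl hrow, ← Finset.mul_sum, Wq]
    case hi =>
      rintro ⟨f, x⟩ hp
      simp only [Finset.mem_sigma, Finset.mem_filter, Finsupp.mem_support_iff] at hp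
      obtain ⟨hf, hfx, hx2⟩ := hp
      obtain ⟨ht, hw, h0⟩ := mem_NN.1 hf
      have hdec := dec_add hfx
      set h := decF f x with hh
      simp only [Finset.mem_sigma]
      have hx1 : x - 1 + 1 = x := by omega
      have htg : tsum (h + Finsupp.single (x - 1) 1) = j + 1 := by
        rw [tsum_add_single]
        have hq : tsum (h + Finsupp.single x 1) = j + 1 := by rw [hdec]; exact ht
        rw [tsum_add_single] at hq; omega
      have hwg : wsum (h + Finsupp.single (x - 1) 1) = m + 1 := by
        rw [wsum_add_single, hx1]
        have hq : wsum (h + Finsupp.single x 1) = m + 2 := by rw [hdec]; exact hw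
        rw [wsum_add_single] at hq; omega
      have h0g : ((h + Finsupp.single (x - 1) 1 : ℕ →₀ ℕ)) 0 = 0 := by
        rw [Finsupp.add_apply, Finsupp.single_apply, if_neg (by omega : ¬ x - 1 = 0),
          Nat.add_zero, hh, decF_apply, if_neg (by omega : ¬ (0 : ℕ) = x)]
        exact h0
      refine ⟨mem_NN.2 ⟨htg, hwg, h0g⟩, ?_⟩
      rw [Finsupp.mem_support_iff, Finsupp.add_apply, Finsupp.single_apply, if_pos rfl]
      omega
    case hj =>
      rintro ⟨g, y⟩ hq
      simp only [Finset.mem_sigma, Finsupp.mem_support_iff] at hq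
      obtain ⟨hg, hy⟩ := hq
      obtain ⟨ht, hw, h0⟩ := mem_NN.1 hg
      have hy0 : y ≠ 0 := fun h => hy (h ▸ h0)
      have hdec := dec_add hy
      set h := decF g y with hh
      simp only [Finset.mem_sigma]
      have htg : tsum (h + Finsupp.single (y + 1) 1) = j + 1 := by
        rw [tsum_add_single]
        have hq : tsum (h + Finsupp.single y 1) = j + 1 := by rw [hdec]; exact ht
        rw [tsum_add_single] at hq; omega
      have hwg : wsum (h + Finsupp.single (y + 1) 1) = m + 2 := by
        rw [wsum_add_single]
        have hq : wsum (h + Finsupp.single y 1) = m + 1 := by rw [hdec]; exact hw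
        rw [wsum_add_single] at hq; omega
      have h0g : ((h + Finsupp.single (y + 1) 1 : ℕ →₀ ℕ)) 0 = 0 := by
        rw [Finsupp.add_apply, Finsupp.single_apply, if_neg (by omega : ¬ y + 1 = 0),
          Nat.add_zero, hh, decF_apply, if_neg (Ne.symm hy0)]
        exact h0
      refine ⟨mem_NN.2 ⟨htg, hwg, h0g⟩, ?_⟩
      rw [Finset.mem_filter, Finsupp.mem_support_iff, Finsupp.add_apply, Finsupp.single_apply,
        if_pos rfl]
      exact ⟨by omega, by omega⟩
    case left =>
      rintro ⟨f, x⟩ hp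
      simp only [Finset.mem_sigma, Finset.mem_filter, Finsupp.mem_support_iff] at hp
      obtain ⟨hf, hfx, hx2⟩ := hp
      dsimp only
      have hx1 : x - 1 + 1 = x := by omega
      rw [hx1, dec_add_self, dec_add hfx]
    case right =>
      rintro ⟨g, y⟩ hq
      simp only [Finset.mem_sigma, Finsupp.mem_support_iff] at hq
      obtain ⟨hg, hy⟩ := hq
      dsimp only
      rw [(by omega : y + 1 - 1 = y), dec_add_self, dec_add hy]
    case val =>
      rintro ⟨f, x⟩ hp
      simp only [Finset.mem_sigma, Finset.mem_filter, Finsupp.mem_support_iff] at hp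
      obtain ⟨hf, hfx, hx2⟩ := hp
      dsimp only
      have hdec := dec_add hfx
      set h := decF f x with hh
      have hx1 : x - 1 + 1 = x := by omega
      have hval : ((h + Finsupp.single (x - 1) 1 : ℕ →₀ ℕ)) (x - 1) = h (x - 1) + 1 := by
        rw [Finsupp.add_apply, Finsupp.single_apply, if_pos rfl]
      have hfxh : f x = h x + 1 := by
        rw [← hdec, Finsupp.add_apply, Finsupp.single_apply, if_pos rfl]
      have hdqf : dq f = dq h * ((h x + 1) * (x + 1).factorial) := by
        conv_lhs => rw [← hdec]
        rw [dq_add_single]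
      have hdqg : dq (h + Finsupp.single (x - 1) 1)
          = dq h * ((h (x - 1) + 1) * x.factorial) := by
        rw [dq_add_single, hx1]
      rw [hval, hfxh, hdqf, hdqg]
      have hdqh : (dq h : ℚ) ≠ 0 := by exact_mod_cast (dq_pos h).ne'
      have hxf : ((x + 1).factorial : ℚ) = ((x : ℚ) + 1) * (x.factorial : ℚ) := by
        rw [Nat.factorial_succ]; push_cast; ring
      push_cast
      rw [hxf]
      field_simp
  have hP1 : ∑ f ∈ NN (m + 2) (j + 1),
        (2 * (f 1 : ℚ)) * (((m + 1).factorial : ℚ) / (dq f : ℚ))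
      = ((m : ℚ) + 1) * Wq m j := by
    rw [← Finset.sum_filter_of_ne (p := fun f => f 1 ≠ 0)
      (by
        intro f _ hne
        rcases Nat.eq_zero_or_pos (f 1) with h | h
        · exact absurd (by rw [h]; norm_num) hne
        · omega)]
    rw [Finset.sum_nbij'
      (i := fun f => decF f 1)
      (j := fun g => g + Finsupp.single 1 1)
      (t := NN m j)
      (g := fun g => ((m : ℚ) + 1) * ((m.factorial : ℚ) / (dq g : ℚ)))
      ?hi2 ?hj2 ?left2 ?right2 ?val2]
    · rw [← Finset.mul_sum, Wq]
    case hi2 =>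
      intro f hf
      rw [Finset.mem_filter] at hf
      obtain ⟨hf, hf1⟩ := hf
      obtain ⟨ht, hw, h0⟩ := mem_NN.1 hf
      have hdec := dec_add hf1
      have ht' : tsum (decF f 1 + Finsupp.single 1 1) = j + 1 := by rw [hdec]; exact ht
      have hw' : wsum (decF f 1 + Finsupp.single 1 1) = m + 2 := by rw [hdec]; exact hw
      rw [tsum_add_single] at ht'
      rw [wsum_add_single] at hw'
      refine mem_NN.2 ⟨by omega, by omega, ?_⟩
      rw [decF_apply, if_neg (by omega : ¬ (0:ℕ) = 1)]
      exact h0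
    case hj2 =>
      intro g hg
      obtain ⟨ht, hw, h0⟩ := mem_NN.1 hg
      rw [Finset.mem_filter]
      constructor
      · refine mem_NN.2 ⟨?_, ?_, ?_⟩
        · rw [tsum_add_single, ht]
        · rw [wsum_add_single, hw]
        · rw [Finsupp.add_apply, Finsupp.single_apply, if_neg (by omega : ¬ (1:ℕ) = 0),
            Nat.add_zero]
          exact h0
      · rw [Finsupp.add_apply, Finsupp.single_apply, if_pos rfl]
        omega
    case left2 =>
      intro f hf
      rw [Finset.mem_filter] at hf
      exact dec_add hf.2
    case right2 =>
      intro g _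
      exact dec_add_self g 1
    case val2 =>
      intro f hf
      rw [Finset.mem_filter] at hf
      obtain ⟨hf, hf1⟩ := hf
      have hdec := dec_add hf1
      set h := decF f 1 with hh
      have hf1h : f 1 = h 1 + 1 := by
        rw [← hdec, Finsupp.add_apply, Finsupp.single_apply, if_pos rfl]
      have hdqf : dq f = dq h * ((h 1 + 1) * 2) := by
        conv_lhs => rw [← hdec]
        rw [dq_add_single]
        norm_num [Nat.factorial]
      have hfac : ((m + 1).factorial : ℚ) = ((m : ℚ) + 1) * (m.factorial : ℚ) := by
        rw [Nat.factorial_succ]; push_cast; ring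
      rw [hf1h, hdqf, hfac]
      have hdqh : (dq h : ℚ) ≠ 0 := by exact_mod_cast (dq_pos h).ne'
      push_cast
      field_simp
  rw [Wq, Finset.sum_congr rfl expand, Finset.sum_add_distrib, hP1, hP2]
  ring

end S1A
namespace S1A

lemma assocS2_rec (m j : ℕ) :
    assocS2 (m + 2) (j + 1) = (j + 1) * assocS2 (m + 1) (j + 1) + (m + 1) * assocS2 m j := by
  have h := Wq_rec m j
  rw [← assocS2_eq_Wq, ← assocS2_eq_Wq, ← assocS2_eq_Wq] at h
  exact_mod_cast h

lemma eq_zero_of_tsum {f : ℕ →₀ ℕ} (h : tsum f = 0) : f = 0 := by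
  ext x
  simp only [Finsupp.coe_zero, Pi.zero_apply]
  by_contra hx
  have hmem : x ∈ f.support := Finsupp.mem_support_iff.2 hx
  have : f x ≤ tsum f := by
    unfold tsum Finsupp.sum
    exact Finset.single_le_sum (f := fun y => f y) (fun y _ => Nat.zero_le _) hmem
  omega

lemma wsum_zero : wsum 0 = 0 := by simp [wsum]

lemma assocS2_zero_pos {m : ℕ} (h : m ≠ 0) : assocS2 m 0 = 0 := by
  rw [assocS2_NN]
  have : NN m 0 = ∅ := by
    rw [Finset.eq_empty_iff_forall_notMem]
    intro f hf
    obtain ⟨ht, hw, -⟩ := mem_NN.1 hf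
    rw [eq_zero_of_tsum ht, wsum_zero] at hw
    exact h hw.symm
  rw [this, Finset.sum_empty]

lemma assocS2_eq_zero_of_lt {m j : ℕ} (h : m < 2 * j) : assocS2 m j = 0 := by
  rw [assocS2_NN]
  have : NN m j = ∅ := by
    rw [Finset.eq_empty_iff_forall_notMem]
    intro f hf
    obtain ⟨ht, hw, h0⟩ := mem_NN.1 hf
    have hle : 2 * tsum f ≤ wsum f := by
      unfold tsum wsum Finsupp.sum
      rw [Finset.mul_sum]
      refine Finset.sum_le_sum (fun x hx => ?_)
      have hfx : f x ≠ 0 := Finsupp.mem_support_iff.1 hx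
      have : x ≠ 0 := fun hh => hfx (hh ▸ h0)
      nlinarith [Nat.one_le_iff_ne_zero.2 this]
    rw [ht, hw] at hle
    omega
  rw [this, Finset.sum_empty]

lemma assocS2_zero_zero : assocS2 0 0 = 1 := by
  rw [assocS2_NN]
  have : NN 0 0 = {0} := by
    ext f
    rw [mem_NN, Finset.mem_singleton]
    constructor
    · rintro ⟨ht, -, -⟩; exact eq_zero_of_tsum ht
    · rintro rfl; refine ⟨by simp [tsum], wsum_zero, rfl⟩
  rw [this, Finset.sum_singleton]
  have hdq : dq (0 : ℕ →₀ ℕ) = 1 := by simp [dq]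
  rw [hdq]
  norm_num

lemma chooseB (t s : ℕ) :
    (s + 1) * ((t + s + 1).choose t) = (t + s + 1) * ((t + s).choose t) := by
  have h1 := Nat.choose_succ_right_eq (t + s + 1) t
  have h3 : t + s + 1 - t = s + 1 := by omega
  rw [h3] at h1
  have h2 := Nat.add_one_mul_choose_eq (t + s) t
  calc (s + 1) * ((t + s + 1).choose t) = (t + s + 1).choose t * (s + 1) := by ring
    _ = (t + s + 1).choose (t + 1) * (t + 1) := h1.symm
    _ = (t + s + 1) * ((t + s).choose t) := h2.symm

def G (t d : ℕ) : ℤ :=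
  ∑ j ∈ Finset.range (d + 1), (-1) ^ j * ((t + d + j).choose t : ℤ) * assocS2 (d + j) j

lemma KEY (t d : ℕ) :
    ∑ j ∈ Finset.range (d + 2),
        (-1 : ℤ) ^ j * ((t + d + j).choose t : ℤ) * assocS2 (d + 1 + j) j
      = -(t + d + 1 : ℤ) * G t d := by
  rw [Finset.sum_range_succ']
  have hz : assocS2 (d + 1 + 0) 0 = 0 := assocS2_zero_pos (by omega)
  rw [hz, mul_zero, add_zero]
  have hterm : ∀ j ∈ Finset.range (d + 1),
      (-1 : ℤ) ^ (j + 1) * ((t + d + (j + 1)).choose t : ℤ) * assocS2 (d + 1 + (j + 1)) (j + 1)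
        = ((-1 : ℤ) ^ (j + 1) * ((t + d + j + 1).choose t : ℤ) * (j + 1)
              * assocS2 (d + j + 1) (j + 1))
          + ((-1 : ℤ) ^ (j + 1) * ((t + d + j + 1).choose t : ℤ) * (d + j + 1)
              * assocS2 (d + j) j) := by
    intro j _
    have e1 : t + d + (j + 1) = t + d + j + 1 := by omega
    have e2 : d + 1 + (j + 1) = (d + j) + 2 := by omega
    rw [e1, e2, assocS2_rec (d + j) j]
    push_cast
    ring
  rw [Finset.sum_congr rfl hterm, Finset.sum_add_distrib]
  have hsum_shift : ∀ F : ℕ → ℤ, F 0 = 0 → F (d + 1) = 0 →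
      (∑ j ∈ Finset.range (d + 1), F (j + 1)) = ∑ j ∈ Finset.range (d + 1), F j := by
    intro F h0 htop
    have b1 := Finset.sum_range_succ' F (d + 1)
    have b2 := Finset.sum_range_succ F (d + 1)
    rw [h0, add_zero] at b1
    rw [htop, add_zero] at b2
    rw [← b1, b2]
  set F : ℕ → ℤ :=
    fun i => (-1 : ℤ) ^ i * ((t + d + i).choose t : ℤ) * (i : ℤ) * assocS2 (d + i) i with hF
  have hB : ∑ j ∈ Finset.range (d + 1),
      (-1 : ℤ) ^ (j + 1) * ((t + d + j + 1).choose t : ℤ) * ((j : ℤ) + 1)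
        * assocS2 (d + j + 1) (j + 1)
      = ∑ j ∈ Finset.range (d + 1), F j := by
    have hshape : ∀ j ∈ Finset.range (d + 1),
        (-1 : ℤ) ^ (j + 1) * ((t + d + j + 1).choose t : ℤ) * ((j : ℤ) + 1)
            * assocS2 (d + j + 1) (j + 1) = F (j + 1) := by
      intro j _
      rw [hF]
      dsimp only
      have e1 : t + d + (j + 1) = t + d + j + 1 := by omega
      have e2 : d + (j + 1) = d + j + 1 := by omega
      rw [e1, e2]
      push_cast
      ring
    rw [Finset.sum_congr rfl hshape]
    refine hsum_shift F ?_ ?_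
    · rw [hF]; dsimp only; push_cast; ring
    · rw [hF]; dsimp only; rw [assocS2_eq_zero_of_lt (by omega)]; ring
  rw [hB, ← Finset.sum_add_distrib, G, Finset.mul_sum]
  rw [hF]
  refine Finset.sum_congr rfl (fun j _ => ?_)
  have hc : ((d : ℤ) + j + 1) * ((t + d + j + 1).choose t : ℤ)
      = ((t : ℤ) + d + j + 1) * ((t + d + j).choose t : ℤ) := by
    have := chooseB t (d + j)
    have e1 : t + (d + j) + 1 = t + d + j + 1 := by omega
    have e2 : t + (d + j) = t + d + j := by omega
    rw [e1, e2] at this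
    exact_mod_cast this
  push_cast
  linear_combination (-(-1 : ℤ) ^ j * assocS2 (d + j) j) * hc

end S1A
namespace S1A

lemma G_zero (t : ℕ) : G t 0 = 1 := by
  rw [G]
  simp [assocS2_zero_zero]

lemma G_rec0 (d : ℕ) : G 0 (d + 1) = -((d : ℤ) + 1) * G 0 d := by
  have h := KEY 0 d
  have hsh : ∀ j ∈ Finset.range (d + 2),
      (-1 : ℤ) ^ j * ((0 + (d + 1) + j).choose 0 : ℤ) * assocS2 (d + 1 + j) j
        = (-1 : ℤ) ^ j * ((0 + d + j).choose 0 : ℤ) * assocS2 (d + 1 + j) j := by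
    intro j _
    simp [Nat.choose_zero_right]
  rw [G, Finset.sum_congr rfl hsh, h]
  push_cast
  ring

lemma G_recS (t d : ℕ) :
    G (t + 1) (d + 1) = G t (d + 1) - ((t : ℤ) + d + 2) * G (t + 1) d := by
  have hpascal : ∀ j ∈ Finset.range (d + 2),
      (-1 : ℤ) ^ j * (((t + 1) + (d + 1) + j).choose (t + 1) : ℤ) * assocS2 (d + 1 + j) j
        = (-1 : ℤ) ^ j * ((t + (d + 1) + j).choose t : ℤ) * assocS2 (d + 1 + j) j
          + (-1 : ℤ) ^ j * (((t + 1) + d + j).choose (t + 1) : ℤ) * assocS2 (d + 1 + j) j := by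
    intro j _
    have e1 : (t + 1) + (d + 1) + j = (t + d + 1 + j) + 1 := by omega
    have e2 : t + (d + 1) + j = t + d + 1 + j := by omega
    have e3 : (t + 1) + d + j = t + d + 1 + j := by omega
    rw [e1, e2, e3, Nat.choose_succ_succ (t + d + 1 + j) t]
    push_cast
    ring
  rw [G, Finset.sum_congr rfl hpascal, Finset.sum_add_distrib, ← G, KEY (t + 1) d]
  push_cast
  ring

lemma s1_eq_zero_of_lt : ∀ n k : ℕ, n < k → s1 n k = 0 := by
  intro n
  induction n with
  | zero => intro k hk; obtain ⟨k', rfl⟩ : ∃ k', k = k' + 1 := ⟨k - 1, by omega⟩; rfl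
  | succ n ih =>
    intro k hk
    obtain ⟨k', rfl⟩ : ∃ k', k = k' + 1 := ⟨k - 1, by omega⟩
    show s1 n k' - n * s1 n (k' + 1) = 0
    rw [ih k' (by omega), ih (k' + 1) (by omega)]
    ring

lemma s1_diag : ∀ n : ℕ, s1 n n = 1 := by
  intro n
  induction n with
  | zero => rfl
  | succ n ih =>
    show s1 n n - n * s1 n (n + 1) = 1
    rw [ih, s1_eq_zero_of_lt n (n + 1) (by omega)]
    ring

lemma main_ind : ∀ t d : ℕ, s1 (t + 1 + d) (t + 1) = G t d := by
  intro t
  induction t with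
  | zero =>
    intro d
    induction d with
    | zero => rw [G_zero]; rfl
    | succ d ihd =>
      have e : 0 + 1 + (d + 1) = (d + 1) + 1 := by omega
      rw [e]
      show s1 (d + 1) 0 - (d + 1 : ℕ) * s1 (d + 1) (0 + 1) = G 0 (d + 1)
      have h0 : s1 (d + 1) 0 = 0 := rfl
      have e2 : (0 : ℕ) + 1 + d = d + 1 := by omega
      rw [h0, G_rec0]
      rw [e2] at ihd
      show 0 - ((d : ℤ) + 1) * s1 (d + 1) 1 = _
      rw [show s1 (d + 1) 1 = s1 (d + 1) (0 + 1) from rfl]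
      rw [show s1 (d + 1) (0 + 1) = G 0 d from ihd]
      ring
  | succ t ih =>
    intro d
    induction d with
    | zero => rw [G_zero]; exact s1_diag (t + 2)
    | succ d ihd =>
      have e : t + 1 + 1 + (d + 1) = (t + d + 2) + 1 := by omega
      rw [e]
      show s1 (t + d + 2) (t + 1) - (t + d + 2 : ℕ) * s1 (t + d + 2) (t + 1 + 1)
        = G (t + 1) (d + 1)
      have h1 : s1 (t + d + 2) (t + 1) = G t (d + 1) := by
        have := ih (d + 1)
        rw [show t + 1 + (d + 1) = t + d + 2 from by omega] at this
        exact this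
      have h2 : s1 (t + d + 2) (t + 1 + 1) = G (t + 1) d := by
        have := ihd
        rw [show t + 1 + 1 + d = t + d + 2 from by omega] at this
        exact this
      rw [h1, h2, G_recS]
      push_cast
      ring

end S1A

theorem s1_eq_sum_assocS2 (n k : ℕ) (hk : 1 ≤ k) (hkn : k ≤ n) :
    s1 n k = ∑ r ∈ Finset.Icc (k - 1) (n - 1),
      (-1 : ℤ) ^ (n - 1 - r) * ((2 * n - 2 - r).choose (k - 1)) *
        assocS2 (2 * n - 1 - k - r) (n - 1 - r) := by
  obtain ⟨t, rfl⟩ : ∃ t, k = t + 1 := ⟨k - 1, by omega⟩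
  obtain ⟨d, rfl⟩ : ∃ d, n = t + 1 + d := ⟨n - (t + 1), by omega⟩
  rw [S1A.main_ind t d, S1A.G]
  refine Finset.sum_nbij' (i := fun j => t + d - j) (j := fun r => t + d - r)
    ?_ ?_ ?_ ?_ ?_
  · intro j hj
    rw [Finset.mem_range] at hj
    simp only [Finset.mem_Icc]
    omega
  · intro r hr
    rw [Finset.mem_Icc] at hr
    simp only [Finset.mem_range]
    omega
  · intro j hj
    rw [Finset.mem_range] at hj
    omega
  · intro r hr
    rw [Finset.mem_Icc] at hr
    omega
  · intro j hj
    rw [Finset.mem_range] at hj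
    have e1 : t + 1 + d - 1 - (t + d - j) = j := by omega
    have e2 : 2 * (t + 1 + d) - 2 - (t + d - j) = t + d + j := by omega
    have e3 : 2 * (t + 1 + d) - 1 - (t + 1) - (t + d - j) = d + j := by omega
    have e4 : t + 1 - 1 = t := by omega
    rw [e1, e2, e3, e4]
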